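/- Let ABCD be a convex quadrilateral whose Delaunay triangulation uses diagonal BD. Then hrm(ABD) + hrm(BCD) ≤ hrm(ABC) + hrm(ACD), where hrm of a triangle is the sum of the squares of its side lengths divided by its area. -/

import Mathlib

set_option maxHeartbeats 1000000

/-- Counterclockwise orientation predicate for three planar points. -/
def ccw (A B C : EuclideanSpace ℝ (Fin 2)) : Prop :=
  0 < (B 0 - A 0) * (C 1 - A 1) - (B 1 - A 1) * (C 0 - A 0)

/-- The circumradius of the triangle `XYZ`. -/
noncomputable def circumRad {A B C : EuclideanSpace ℝ (Fin 2)}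
    (h : AffineIndependent ℝ ![A, B, C]) : ℝ :=
  (⟨![A, B, C], h⟩ : Affine.Simplex ℝ (EuclideanSpace ℝ (Fin 2)) 2).circumradius

/-- The circumcenter of the triangle `XYZ`. -/
noncomputable def circumCtr {A B C : EuclideanSpace ℝ (Fin 2)}
    (h : AffineIndependent ℝ ![A, B, C]) : EuclideanSpace ℝ (Fin 2) :=
  (⟨![A, B, C], h⟩ : Affine.Simplex ℝ (EuclideanSpace ℝ (Fin 2)) 2).circumcenter

/-- The area of the planar triangle `ABC`. -/
noncomputable def triArea (A B C : EuclideanSpace ℝ (Fin 2)) : ℝ :=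
  |((B 0 - A 0) * (C 1 - A 1) - (B 1 - A 1) * (C 0 - A 0))| / 2

/-- The harmonic index of a triangle: sum of squares of side lengths over area. -/
noncomputable def triHrm (A B C : EuclideanSpace ℝ (Fin 2)) : ℝ :=
  (dist A B ^ 2 + dist B C ^ 2 + dist C A ^ 2) / triArea A B C

lemma dist_sq_coord (x y : EuclideanSpace ℝ (Fin 2)) :
    dist x y ^ 2 = (x 0 - y 0) ^ 2 + (x 1 - y 1) ^ 2 := by
  rw [EuclideanSpace.dist_eq, Real.sq_sqrt (by positivity)]
  simp [Fin.sum_univ_two, Real.dist_eq, sq_abs]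

lemma key_hrm (a1 a2 b1 b2 c1 c2 d1 d2 o1 o2 r : ℝ)
    (hS1 : 0 < (b1 - a1) * (d2 - a2) - (b2 - a2) * (d1 - a1))
    (hS2 : 0 < (c1 - b1) * (d2 - b2) - (c2 - b2) * (d1 - b1))
    (hS3 : 0 < (b1 - a1) * (c2 - a2) - (b2 - a2) * (c1 - a1))
    (hS4 : 0 < (c1 - a1) * (d2 - a2) - (c2 - a2) * (d1 - a1))
    (hA : (a1 - o1) ^ 2 + (a2 - o2) ^ 2 = r ^ 2)
    (hB : (b1 - o1) ^ 2 + (b2 - o2) ^ 2 = r ^ 2)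
    (hD : (d1 - o1) ^ 2 + (d2 - o2) ^ 2 = r ^ 2)
    (hC : r ^ 2 < (c1 - o1) ^ 2 + (c2 - o2) ^ 2) :
    ((a1 - b1) ^ 2 + (a2 - b2) ^ 2 + ((b1 - d1) ^ 2 + (b2 - d2) ^ 2) +
        ((d1 - a1) ^ 2 + (d2 - a2) ^ 2)) /
      (((b1 - a1) * (d2 - a2) - (b2 - a2) * (d1 - a1)) / 2) +
    ((b1 - c1) ^ 2 + (b2 - c2) ^ 2 + ((c1 - d1) ^ 2 + (c2 - d2) ^ 2) +
        ((d1 - b1) ^ 2 + (d2 - b2) ^ 2)) /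
      (((c1 - b1) * (d2 - b2) - (c2 - b2) * (d1 - b1)) / 2) ≤
    ((a1 - b1) ^ 2 + (a2 - b2) ^ 2 + ((b1 - c1) ^ 2 + (b2 - c2) ^ 2) +
        ((c1 - a1) ^ 2 + (c2 - a2) ^ 2)) /
      (((b1 - a1) * (c2 - a2) - (b2 - a2) * (c1 - a1)) / 2) +
    ((a1 - c1) ^ 2 + (a2 - c2) ^ 2 + ((c1 - d1) ^ 2 + (c2 - d2) ^ 2) +
        ((d1 - a1) ^ 2 + (d2 - a2) ^ 2)) /
      (((c1 - a1) * (d2 - a2) - (c2 - a2) * (d1 - a1)) / 2) := by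
  have hp : 0 < (c1 - o1) ^ 2 + (c2 - o2) ^ 2 - r ^ 2 := by linarith
  have hQp : 0 ≤ ((b1 - a1) * (d2 - a2) - (b2 - a2) * (d1 - a1)) ^ 2 +
      ((b1 - a1) * (d2 - a2) - (b2 - a2) * (d1 - a1)) *
        ((c1 - b1) * (d2 - b2) - (c2 - b2) * (d1 - b1)) +
      ((c1 - b1) * (d2 - b2) - (c2 - b2) * (d1 - b1)) ^ 2 -
      ((b1 - a1) * (c2 - a2) - (b2 - a2) * (c1 - a1)) *
        ((c1 - a1) * (d2 - a2) - (c2 - a2) * (d1 - a1)) := by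
    linarith [sq_nonneg ((b1 - a1) * (d2 - a2) - (b2 - a2) * (d1 - a1) +
        ((c1 - b1) * (d2 - b2) - (c2 - b2) * (d1 - b1))),
      sq_nonneg ((b1 - a1) * (d2 - a2) - (b2 - a2) * (d1 - a1) -
        ((c1 - b1) * (d2 - b2) - (c2 - b2) * (d1 - b1))),
      sq_nonneg ((b1 - a1) * (c2 - a2) - (b2 - a2) * (c1 - a1) -
        ((c1 - a1) * (d2 - a2) - (c2 - a2) * (d1 - a1)))]
  have hD4 : ((b1 - a1) * (c2 - a2) - (b2 - a2) * (c1 - a1)) * (d1 ^ 2 + d2 ^ 2) +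
      ((c1 - a1) * (d2 - a2) - (c2 - a2) * (d1 - a1)) * (b1 ^ 2 + b2 ^ 2) -
      ((c1 - b1) * (d2 - b2) - (c2 - b2) * (d1 - b1)) * (a1 ^ 2 + a2 ^ 2) -
      ((b1 - a1) * (d2 - a2) - (b2 - a2) * (d1 - a1)) * (c1 ^ 2 + c2 ^ 2) =
      -((b1 - a1) * (d2 - a2) - (b2 - a2) * (d1 - a1)) *
        ((c1 - o1) ^ 2 + (c2 - o2) ^ 2 - r ^ 2) := by
    linear_combination (-((c1 - b1) * (d2 - b2) - (c2 - b2) * (d1 - b1))) * hA +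
      ((c1 - a1) * (d2 - a2) - (c2 - a2) * (d1 - a1)) * hB +
      ((b1 - a1) * (c2 - a2) - (b2 - a2) * (c1 - a1)) * hD
  have hnum : 0 ≤ -(((b1 - a1) * (c2 - a2) - (b2 - a2) * (c1 - a1)) * (d1 ^ 2 + d2 ^ 2) +
      ((c1 - a1) * (d2 - a2) - (c2 - a2) * (d1 - a1)) * (b1 ^ 2 + b2 ^ 2) -
      ((c1 - b1) * (d2 - b2) - (c2 - b2) * (d1 - b1)) * (a1 ^ 2 + a2 ^ 2) -
      ((b1 - a1) * (d2 - a2) - (b2 - a2) * (d1 - a1)) * (c1 ^ 2 + c2 ^ 2)) *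
      (((b1 - a1) * (d2 - a2) - (b2 - a2) * (d1 - a1)) ^ 2 +
      ((b1 - a1) * (d2 - a2) - (b2 - a2) * (d1 - a1)) *
        ((c1 - b1) * (d2 - b2) - (c2 - b2) * (d1 - b1)) +
      ((c1 - b1) * (d2 - b2) - (c2 - b2) * (d1 - b1)) ^ 2 -
      ((b1 - a1) * (c2 - a2) - (b2 - a2) * (c1 - a1)) *
        ((c1 - a1) * (d2 - a2) - (c2 - a2) * (d1 - a1))) := by
    rw [hD4]
    have h := mul_nonneg (mul_nonneg hS1.le hp.le) hQp
    linarith [h]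
  rw [div_add_div _ _ (by positivity) (by positivity),
    div_add_div _ _ (by positivity) (by positivity),
    div_le_div_iff₀ (by positivity) (by positivity)]
  linarith [hnum]

/-- If the Delaunay triangulation of a convex quadrilateral `ABCD` uses diagonal `BD`,
then `hrm(ABD) + hrm(BCD) ≤ hrm(ABC) + hrm(ACD)`. -/
theorem delaunay_harmonic_index_le (A B C D : EuclideanSpace ℝ (Fin 2))
    (hconv : ccw A B C ∧ ccw B C D ∧ ccw C D A ∧ ccw D A B)
    (hABD : AffineIndependent ℝ ![A, B, D]) (hBCD : AffineIndependent ℝ ![B, C, D])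
    (hDel₁ : dist C (circumCtr hABD) > circumRad hABD)
    (hDel₂ : dist A (circumCtr hBCD) > circumRad hBCD) :
    triHrm A B D + triHrm B C D ≤ triHrm A B C + triHrm A C D := by
  obtain ⟨h1, h2, h3, h4⟩ := hconv
  have hABC : 0 < (B 0 - A 0) * (C 1 - A 1) - (B 1 - A 1) * (C 0 - A 0) := h1
  have hBCD' : 0 < (C 0 - B 0) * (D 1 - B 1) - (C 1 - B 1) * (D 0 - B 0) := h2
  have hCDA : 0 < (D 0 - C 0) * (A 1 - C 1) - (D 1 - C 1) * (A 0 - C 0) := h3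
  have hDAB : 0 < (A 0 - D 0) * (B 1 - D 1) - (A 1 - D 1) * (B 0 - D 0) := h4
  have hS1 : 0 < (B 0 - A 0) * (D 1 - A 1) - (B 1 - A 1) * (D 0 - A 0) := by linarith
  have hS4 : 0 < (C 0 - A 0) * (D 1 - A 1) - (C 1 - A 1) * (D 0 - A 0) := by linarith
  have hAO : dist A (circumCtr hABD) = circumRad hABD := by
    simpa [circumCtr, circumRad] using (⟨![A, B, D], hABD⟩ :
      Affine.Simplex ℝ (EuclideanSpace ℝ (Fin 2)) 2).dist_circumcenter_eq_circumradius 0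
  have hBO : dist B (circumCtr hABD) = circumRad hABD := by
    simpa [circumCtr, circumRad] using (⟨![A, B, D], hABD⟩ :
      Affine.Simplex ℝ (EuclideanSpace ℝ (Fin 2)) 2).dist_circumcenter_eq_circumradius 1
  have hDO : dist D (circumCtr hABD) = circumRad hABD := by
    simpa [circumCtr, circumRad] using (⟨![A, B, D], hABD⟩ :
      Affine.Simplex ℝ (EuclideanSpace ℝ (Fin 2)) 2).dist_circumcenter_eq_circumradius 2
  have hA : (A 0 - (circumCtr hABD) 0) ^ 2 + (A 1 - (circumCtr hABD) 1) ^ 2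
      = circumRad hABD ^ 2 := by rw [← dist_sq_coord, hAO]
  have hB : (B 0 - (circumCtr hABD) 0) ^ 2 + (B 1 - (circumCtr hABD) 1) ^ 2
      = circumRad hABD ^ 2 := by rw [← dist_sq_coord, hBO]
  have hD : (D 0 - (circumCtr hABD) 0) ^ 2 + (D 1 - (circumCtr hABD) 1) ^ 2
      = circumRad hABD ^ 2 := by rw [← dist_sq_coord, hDO]
  have hC : circumRad hABD ^ 2 <
      (C 0 - (circumCtr hABD) 0) ^ 2 + (C 1 - (circumCtr hABD) 1) ^ 2 := by
    rw [← dist_sq_coord]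
    nlinarith [hDel₁, hAO ▸ (dist_nonneg : (0:ℝ) ≤ dist A (circumCtr hABD))]
  simp only [triHrm, triArea, dist_sq_coord]
  rw [abs_of_pos hS1, abs_of_pos hBCD', abs_of_pos hABC, abs_of_pos hS4]
  exact key_hrm (A 0) (A 1) (B 0) (B 1) (C 0) (C 1) (D 0) (D 1)
    ((circumCtr hABD) 0) ((circumCtr hABD) 1) (circumRad hABD)
    hS1 hBCD' hABC hS4 hA hB hD hC
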